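/- Let R ≥ 1, σ > 0, let a ∈ [0, R], and let ε > 0 satisfy ε ≤ R. Let w and b be independent centered Gaussian random variables, each with variance σ². Then the probability that both w ∈ (σ/R, 2σ/R) and −b/w ∈ (a, a + ε) is at least ε/(512·R⁴). -/

import Mathlib

open MeasureTheory ProbabilityTheory

namespace Stmt14Aux
open Real

lemma exp_rat_lt (p n : ℕ) (M : ℝ) (hn : 0 < n) (hM : 0 < M)
    (h : (2.7182818286 : ℝ) ^ p < M ^ n) : Real.exp ((p : ℕ) / (n:ℝ)) < M := by
  have h1 : Real.exp ((p : ℝ) / n) ^ n = Real.exp p := by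
    rw [← Real.exp_nat_mul]
    congr 1
    field_simp
  have h2 : Real.exp (p : ℝ) = Real.exp 1 ^ p := by
    rw [← Real.exp_nat_mul]; norm_num
  have h3 : Real.exp 1 ^ p ≤ (2.7182818286 : ℝ) ^ p :=
    pow_le_pow_left₀ (Real.exp_pos 1).le Real.exp_one_lt_d9.le p
  have h4 : Real.exp ((p : ℝ) / n) ^ n < M ^ n := by
    rw [h1, h2]; exact lt_of_le_of_lt h3 h
  exact lt_of_pow_lt_pow_left₀ n hM.le h4

lemma exp_neg_ge (p n : ℕ) (M : ℝ) (hn : 0 < n) (hM : 0 < M)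
    (h : (2.7182818286 : ℝ) ^ p < M ^ n) : M⁻¹ ≤ Real.exp (-((p : ℕ) / (n:ℝ))) := by
  rw [Real.exp_neg]
  exact inv_anti₀ (Real.exp_pos _) (exp_rat_lt p n M hn hM h).le

lemma var_ne_zero {σ : ℝ} (hσ : 0 < σ) : (⟨σ ^ 2, sq_nonneg σ⟩ : NNReal) ≠ 0 := by
  intro h
  have : σ ^ 2 = 0 := congrArg NNReal.toReal h
  exact (pow_pos hσ 2).ne' this

lemma gauss_Ioo_lb {σ : ℝ} (hσ : 0 < σ) (u v K : ℝ)
    (hK : ∀ x ∈ Set.Ioo u v, x ^ 2 ≤ 2 * σ ^ 2 * K) :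
    ENNReal.ofReal ((v - u) * (Real.exp (-K) / (σ * Real.sqrt (2 * π)))) ≤
      gaussianReal 0 ⟨σ ^ 2, sq_nonneg σ⟩ (Set.Ioo u v) := by
  rw [gaussianReal_apply _ (var_ne_zero hσ)]
  have hc : ∀ x ∈ Set.Ioo u v,
      ENNReal.ofReal (Real.exp (-K) / (σ * Real.sqrt (2 * π))) ≤
        gaussianPDF 0 ⟨σ ^ 2, sq_nonneg σ⟩ x := by
    intro x hx
    unfold gaussianPDF gaussianPDFReal
    apply ENNReal.ofReal_le_ofReal
    show rexp (-K) / (σ * √(2 * π)) ≤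
      (√(2 * π * σ ^ 2))⁻¹ * rexp (-(x - 0) ^ 2 / (2 * σ ^ 2))
    have hsqrt : Real.sqrt (2 * π * σ ^ 2) = σ * Real.sqrt (2 * π) := by
      rw [Real.sqrt_mul (by positivity), Real.sqrt_sq hσ.le]; ring
    rw [hsqrt]
    rw [div_eq_mul_inv, mul_comm]
    gcongr
    have h2σ : (0:ℝ) < 2 * σ ^ 2 := by positivity
    rw [neg_le, neg_div, neg_neg, div_le_iff₀ h2σ, sub_zero]
    nlinarith [hK x hx]
  calc ENNReal.ofReal ((v - u) * (Real.exp (-K) / (σ * Real.sqrt (2 * π))))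
      = ENNReal.ofReal (Real.exp (-K) / (σ * Real.sqrt (2 * π))) * volume (Set.Ioo u v) := by
        rw [Real.volume_Ioo, ← ENNReal.ofReal_mul (by positivity), mul_comm]
    _ = ∫⁻ _ in Set.Ioo u v, ENNReal.ofReal (Real.exp (-K) / (σ * Real.sqrt (2 * π))) := by
        rw [setLIntegral_const]
    _ ≤ ∫⁻ x in Set.Ioo u v, gaussianPDF 0 ⟨σ ^ 2, sq_nonneg σ⟩ x :=
        setLIntegral_mono (measurable_gaussianPDF _ _) hc

lemma gauss_two_piece {σ : ℝ} (hσ : 0 < σ) (u m v ℓ K₁ K₂ : ℝ)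
    (hum : u ≤ m) (hmv : m ≤ v)
    (hℓ1 : ℓ ≤ m - u) (hℓ2 : ℓ ≤ v - m)
    (hK1 : ∀ x ∈ Set.Ioo u m, x ^ 2 ≤ 2 * σ ^ 2 * K₁)
    (hK2 : ∀ x ∈ Set.Ioo m v, x ^ 2 ≤ 2 * σ ^ 2 * K₂) :
    ENNReal.ofReal (ℓ * ((Real.exp (-K₁) + Real.exp (-K₂)) / (σ * Real.sqrt (2 * π)))) ≤
      gaussianReal 0 ⟨σ ^ 2, sq_nonneg σ⟩ (Set.Ioo u v) := by
  set μ := gaussianReal 0 (⟨σ ^ 2, sq_nonneg σ⟩ : NNReal)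
  have hdisj : Disjoint (Set.Ioo u m) (Set.Ioo m v) := by
    apply Set.disjoint_left.mpr
    rintro x ⟨_, h1⟩ ⟨h2, _⟩
    exact absurd h1 (not_lt.mpr h2.le)
  have hsub : Set.Ioo u m ∪ Set.Ioo m v ⊆ Set.Ioo u v := by
    rintro x (⟨h1, h2⟩ | ⟨h1, h2⟩) <;> exact ⟨by linarith, by linarith⟩
  have hunion : μ (Set.Ioo u m) + μ (Set.Ioo m v) ≤ μ (Set.Ioo u v) := by
    rw [← measure_union hdisj measurableSet_Ioo]
    exact measure_mono hsub
  refine le_trans ?_ hunion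
  have h1 := gauss_Ioo_lb hσ u m K₁ hK1
  have h2 := gauss_Ioo_lb hσ m v K₂ hK2
  calc ENNReal.ofReal (ℓ * ((Real.exp (-K₁) + Real.exp (-K₂)) / (σ * Real.sqrt (2 * π))))
      = ENNReal.ofReal (ℓ * (Real.exp (-K₁) / (σ * Real.sqrt (2 * π)))
          + ℓ * (Real.exp (-K₂) / (σ * Real.sqrt (2 * π)))) := by ring_nf
    _ ≤ ENNReal.ofReal (ℓ * (Real.exp (-K₁) / (σ * Real.sqrt (2 * π))))
          + ENNReal.ofReal (ℓ * (Real.exp (-K₂) / (σ * Real.sqrt (2 * π)))) :=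
        ENNReal.ofReal_add_le
    _ ≤ ENNReal.ofReal ((m - u) * (Real.exp (-K₁) / (σ * Real.sqrt (2 * π))))
          + ENNReal.ofReal ((v - m) * (Real.exp (-K₂) / (σ * Real.sqrt (2 * π)))) := by
        gcongr
    _ ≤ μ (Set.Ioo u m) + μ (Set.Ioo m v) := add_le_add h1 h2

set_option maxHeartbeats 1600000 in
lemma inner_lb (σ R a ε w : ℝ) (hR : 1 ≤ R) (hσ : 0 < σ) (ha0 : 0 ≤ a) (haR : a ≤ R)
    (hε : 0 < ε) (hεR : ε ≤ R) (hw1 : σ / R < w) (hw2 : w < 13 / 10 * (σ / R)) :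
    ENNReal.ofReal (3 * ε * σ / (10 * R) *
        ((Real.exp (-(11 / 5)) + Real.exp (-(29 / 20))) / (σ * Real.sqrt (2 * π)))) ≤
      gaussianReal 0 ⟨σ ^ 2, sq_nonneg σ⟩ (Set.Ioo (-((a + ε) * w)) (-(a * w))) := by
  have hR0 : (0:ℝ) < R := lt_of_lt_of_le one_pos hR
  have hσR : 0 < σ / R := by positivity
  have hw0 : 0 < w := lt_trans hσR hw1
  set ε₀ : ℝ := min ε (3 * R / 5) with hε₀def
  have hε₀pos : 0 < ε₀ := lt_min hε (by positivity)
  have hε₀ε : ε₀ ≤ ε := min_le_left _ _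
  have hε₀R : ε₀ ≤ 3 * R / 5 := min_le_right _ _
  have h35 : 3 / 5 * ε ≤ ε₀ := le_min (by linarith) (by linarith)
  have hwub : w ≤ 13 / 10 * (σ / R) := hw2.le
  have hmono1 : (a + ε₀) * w ≤ (a + ε) * w :=
    mul_le_mul_of_nonneg_right (by linarith) hw0.le
  have hmono2 : (a + ε₀ / 2) * w ≤ (a + ε₀) * w :=
    mul_le_mul_of_nonneg_right (by linarith) hw0.le
  have hmono3 : a * w ≤ (a + ε₀ / 2) * w :=
    mul_le_mul_of_nonneg_right (by linarith) hw0.le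
  have hsub : Set.Ioo (-((a + ε₀) * w)) (-(a * w)) ⊆ Set.Ioo (-((a + ε) * w)) (-(a * w)) :=
    Set.Ioo_subset_Ioo_left (by linarith)
  refine le_trans ?_ (measure_mono hsub)
  have key := gauss_two_piece hσ (-((a + ε₀) * w)) (-((a + ε₀ / 2) * w)) (-(a * w))
      (3 * ε * σ / (10 * R)) (11 / 5) (29 / 20) (by linarith) (by linarith)
      ?_ ?_ ?_ ?_
  · exact key
  · -- ℓ ≤ m - u = (ε₀/2) * w
    have : -((a + ε₀ / 2) * w) - -((a + ε₀) * w) = ε₀ / 2 * w := by ring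
    rw [this]
    have h1 : 3 / 10 * ε * (σ / R) ≤ ε₀ / 2 * w := by
      have := mul_le_mul h35 hw1.le hσR.le (by linarith : (0:ℝ) ≤ ε₀)
      nlinarith
    calc 3 * ε * σ / (10 * R) = 3 / 10 * ε * (σ / R) := by ring
      _ ≤ ε₀ / 2 * w := h1
  · -- ℓ ≤ v - m
    have : -(a * w) - -((a + ε₀ / 2) * w) = ε₀ / 2 * w := by ring
    rw [this]
    have h1 : 3 / 10 * ε * (σ / R) ≤ ε₀ / 2 * w := by
      have := mul_le_mul h35 hw1.le hσR.le (by linarith : (0:ℝ) ≤ ε₀)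
      nlinarith
    calc 3 * ε * σ / (10 * R) = 3 / 10 * ε * (σ / R) := by ring
      _ ≤ ε₀ / 2 * w := h1
  · -- first piece bound : x² ≤ 2σ² (11/5)
    rintro x ⟨hx1, hx2⟩
    have hA : (a + ε₀) * w ≤ 104 / 50 * σ := by
      have h1 : a + ε₀ ≤ 8 / 5 * R := by linarith
      calc (a + ε₀) * w ≤ 8 / 5 * R * (13 / 10 * (σ / R)) :=
            mul_le_mul h1 hwub hw0.le (by positivity)
        _ = 104 / 50 * σ := by field_simp; ring
    have hm0 : 0 < (a + ε₀ / 2) * w := mul_pos (by linarith) hw0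
    have hxneg : x < 0 := by linarith
    have hApos : 0 < (a + ε₀) * w := mul_pos (by linarith) hw0
    have h1 : x ^ 2 ≤ ((a + ε₀) * w) ^ 2 := by
      nlinarith [mul_pos (show (0:ℝ) < (a + ε₀) * w - x by linarith)
        (show (0:ℝ) < (a + ε₀) * w + x by linarith)]
    have h2 : ((a + ε₀) * w) ^ 2 ≤ (104 / 50 * σ) ^ 2 := by nlinarith
    nlinarith
  · -- second piece bound : x² ≤ 2σ² (29/20)
    rintro x ⟨hx1, hx2⟩
    have hA : (a + ε₀ / 2) * w ≤ 169 / 100 * σ := by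
      have h1 : a + ε₀ / 2 ≤ 13 / 10 * R := by linarith
      calc (a + ε₀ / 2) * w ≤ 13 / 10 * R * (13 / 10 * (σ / R)) :=
            mul_le_mul h1 hwub hw0.le (by positivity)
        _ = 169 / 100 * σ := by field_simp; ring
    have haw : 0 ≤ a * w := mul_nonneg ha0 hw0.le
    have hxneg : x < 0 ∨ x ^ 2 ≤ ((a + ε₀ / 2) * w) ^ 2 := by
      rcases lt_or_ge x 0 with h | h
      · exact Or.inl h
      · exact Or.inr (by nlinarith)
    have hApos : 0 < (a + ε₀ / 2) * w := mul_pos (by linarith) hw0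
    have h1 : x ^ 2 ≤ ((a + ε₀ / 2) * w) ^ 2 := by
      rcases hxneg with h | h
      · nlinarith [mul_pos (show (0:ℝ) < (a + ε₀ / 2) * w - x by linarith)
          (show (0:ℝ) < (a + ε₀ / 2) * w + x by linarith)]
      · exact h
    have h2 : ((a + ε₀ / 2) * w) ^ 2 ≤ (169 / 100 * σ) ^ 2 := by nlinarith
    nlinarith

set_option maxHeartbeats 1600000 in
lemma outer_lb (σ R : ℝ) (hR : 1 ≤ R) (hσ : 0 < σ) :
    ENNReal.ofReal (3 * σ / (20 * R) *
        ((Real.exp (-(7 / 10)) + Real.exp (-(17 / 20))) / (σ * Real.sqrt (2 * π)))) ≤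
      gaussianReal 0 ⟨σ ^ 2, sq_nonneg σ⟩ (Set.Ioo (σ / R) (13 / 10 * (σ / R))) := by
  have hR0 : (0:ℝ) < R := lt_of_lt_of_le one_pos hR
  have hσR : 0 < σ / R := by positivity
  have hσRσ : σ / R ≤ σ := div_le_self hσ.le hR
  have key := gauss_two_piece hσ (σ / R) (23 / 20 * (σ / R)) (13 / 10 * (σ / R))
      (3 * σ / (20 * R)) (7 / 10) (17 / 20) (by nlinarith) (by nlinarith)
      ?_ ?_ ?_ ?_
  · exact key
  · have : 23 / 20 * (σ / R) - σ / R = 3 / 20 * (σ / R) := by ring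
    rw [this]
    rw [div_le_iff₀ (by positivity : (0:ℝ) < 20 * R)]
    field_simp; norm_num
  · have : 13 / 10 * (σ / R) - 23 / 20 * (σ / R) = 3 / 20 * (σ / R) := by ring
    rw [this]
    rw [div_le_iff₀ (by positivity : (0:ℝ) < 20 * R)]
    field_simp; norm_num
  · rintro x ⟨hx1, hx2⟩
    have hub : x ≤ 23 / 20 * σ := by nlinarith
    have hlb : 0 < x := lt_trans hσR hx1
    nlinarith
  · rintro x ⟨hx1, hx2⟩
    have hub : x ≤ 13 / 10 * σ := by nlinarith
    have hlb : 0 < x := by nlinarith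
    nlinarith

end Stmt14Aux

open Stmt14Aux Real in
set_option maxHeartbeats 1600000 in
/-- Let `R ≥ 1`, `σ > 0`, `a ∈ [0, R]`, and `0 < ε ≤ R`. If `W` and `B` are
independent centered Gaussian random variables with variance `σ²`, then the probability that
`W ∈ (σ/R, 2σ/R)` and `-B/W ∈ (a, a + ε)` is at least `ε / (512 R⁴)`. -/
theorem stmt14 {Ω : Type*} [MeasureSpace Ω] [IsProbabilityMeasure (ℙ : Measure Ω)]
    (R σ a ε : ℝ) (hR : 1 ≤ R) (hσ : 0 < σ) (ha : a ∈ Set.Icc 0 R)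
    (hε : 0 < ε) (hεR : ε ≤ R)
    (W B : Ω → ℝ) (hWm : Measurable W) (hBm : Measurable B)
    (hindep : IndepFun W B)
    (hW : Measure.map W ℙ = gaussianReal 0 ⟨σ ^ 2, sq_nonneg σ⟩)
    (hB : Measure.map B ℙ = gaussianReal 0 ⟨σ ^ 2, sq_nonneg σ⟩) :
    ENNReal.ofReal (ε / (512 * R ^ 4)) ≤
      ℙ {ω | W ω ∈ Set.Ioo (σ / R) (2 * σ / R) ∧ -B ω / W ω ∈ Set.Ioo a (a + ε)} := by
  obtain ⟨ha0, haR⟩ := ha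
  have hR0 : (0:ℝ) < R := lt_of_lt_of_le one_pos hR
  have hσR : 0 < σ / R := by positivity
  set μ : Measure ℝ := gaussianReal 0 ⟨σ ^ 2, sq_nonneg σ⟩ with hμdef
  set S : Set (ℝ × ℝ) :=
    {p | p.1 ∈ Set.Ioo (σ / R) (2 * σ / R) ∧ -p.2 / p.1 ∈ Set.Ioo a (a + ε)} with hSdef
  haveI hPμ : IsProbabilityMeasure μ := instIsProbabilityMeasureGaussianReal _ _
  have hS : MeasurableSet S := by
    apply MeasurableSet.inter
    · exact measurable_fst measurableSet_Ioo
    · exact (measurable_snd.neg.div measurable_fst) measurableSet_Ioo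
  have hprod : Measure.map (fun ω => (W ω, B ω)) ℙ = μ.prod μ := by
    have h := (indepFun_iff_map_prod_eq_prod_map_map hWm.aemeasurable hBm.aemeasurable).mp hindep
    rw [h, hW, hB]
  have hev : {ω | W ω ∈ Set.Ioo (σ / R) (2 * σ / R) ∧ -B ω / W ω ∈ Set.Ioo a (a + ε)} =
      (fun ω => (W ω, B ω)) ⁻¹' S := rfl
  rw [hev, ← Measure.map_apply (hWm.prodMk hBm) hS, hprod, Measure.prod_apply hS]
  -- inner bound constant
  set Cin : ENNReal := ENNReal.ofReal (3 * ε * σ / (10 * R) *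
      ((Real.exp (-(11 / 5)) + Real.exp (-(29 / 20))) / (σ * Real.sqrt (2 * π)))) with hCin
  have hinner : ∀ w ∈ Set.Ioo (σ / R) (13 / 10 * (σ / R)),
      Cin ≤ μ (Prod.mk w ⁻¹' S) := by
    rintro w ⟨hw1, hw2⟩
    have hw0 : 0 < w := lt_trans hσR hw1
    have hwI : w ∈ Set.Ioo (σ / R) (2 * σ / R) := by
      constructor
      · exact hw1
      · calc w < 13 / 10 * (σ / R) := hw2
          _ ≤ 2 * σ / R := by rw [mul_div_assoc]; nlinarith
    have hset : Prod.mk w ⁻¹' S = Set.Ioo (-((a + ε) * w)) (-(a * w)) := by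
      ext b
      simp only [hSdef, Set.mem_preimage, Set.mem_setOf_eq, Set.mem_Ioo]
      constructor
      · rintro ⟨_, h1, h2⟩
        rw [lt_div_iff₀ hw0] at h1
        rw [div_lt_iff₀ hw0] at h2
        constructor <;> linarith
      · rintro ⟨h1, h2⟩
        refine ⟨hwI, ?_, ?_⟩
        · rw [lt_div_iff₀ hw0]; linarith
        · rw [div_lt_iff₀ hw0]; linarith
    rw [hset]
    exact inner_lb σ R a ε w hR hσ ha0 haR hε hεR hw1 hw2
  have houter := outer_lb σ R hR hσ
  -- main chain
  have hmain : Cin * ENNReal.ofReal (3 * σ / (20 * R) *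
      ((Real.exp (-(7 / 10)) + Real.exp (-(17 / 20))) / (σ * Real.sqrt (2 * π)))) ≤
      ∫⁻ w, μ (Prod.mk w ⁻¹' S) ∂μ := by
    calc Cin * ENNReal.ofReal (3 * σ / (20 * R) *
        ((Real.exp (-(7 / 10)) + Real.exp (-(17 / 20))) / (σ * Real.sqrt (2 * π))))
        ≤ Cin * μ (Set.Ioo (σ / R) (13 / 10 * (σ / R))) := by gcongr
      _ = ∫⁻ _ in Set.Ioo (σ / R) (13 / 10 * (σ / R)), Cin ∂μ := (setLIntegral_const _ _).symm
      _ ≤ ∫⁻ w in Set.Ioo (σ / R) (13 / 10 * (σ / R)), μ (Prod.mk w ⁻¹' S) ∂μ :=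
          setLIntegral_mono (measurable_measure_prodMk_left hS) hinner
      _ ≤ ∫⁻ w, μ (Prod.mk w ⁻¹' S) ∂μ := setLIntegral_le_lintegral _ _
  refine le_trans ?_ hmain
  rw [hCin, ← ENNReal.ofReal_mul (by positivity)]
  apply ENNReal.ofReal_le_ofReal
  -- now a real-number inequality
  have hspos : 0 < Real.sqrt (2 * π) := Real.sqrt_pos.mpr (by positivity)
  have hs : Real.sqrt (2 * π) * Real.sqrt (2 * π) = 2 * π :=
    Real.mul_self_sqrt (by positivity)
  have hE1 : (100 / 903 : ℝ) ≤ Real.exp (-(11 / 5)) := by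
    have := exp_neg_ge 11 5 (903 / 100) (by norm_num) (by norm_num) (by norm_num)
    norm_num at this ⊢
    convert this using 2
  have hE2 : (100 / 427 : ℝ) ≤ Real.exp (-(29 / 20)) := by
    have := exp_neg_ge 29 20 (427 / 100) (by norm_num) (by norm_num) (by norm_num)
    norm_num at this ⊢
    convert this using 2
  have hE3 : (50 / 101 : ℝ) ≤ Real.exp (-(7 / 10)) := by
    have := exp_neg_ge 7 10 (101 / 50) (by norm_num) (by norm_num) (by norm_num)
    norm_num at this ⊢
    convert this using 2
  have hE4 : (50 / 117 : ℝ) ≤ Real.exp (-(17 / 20)) := by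
    have := exp_neg_ge 17 20 (117 / 50) (by norm_num) (by norm_num) (by norm_num)
    norm_num at this ⊢
    convert this using 2
  have hπ : π < 3.141593 := Real.pi_lt_d6
  have hπ0 : 0 < π := Real.pi_pos
  obtain ⟨s, hsg, hs2, hs0⟩ : ∃ s, Real.sqrt (2 * π) = s ∧ s * s = 2 * π ∧ 0 < s :=
    ⟨_, rfl, hs, hspos⟩
  rw [hsg]
  obtain ⟨E12, h12g, hE12lb⟩ :
      ∃ y, Real.exp (-(11 / 5)) + Real.exp (-(29 / 20)) = y ∧ (34 / 100 : ℝ) ≤ y :=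
    ⟨_, rfl, by linarith⟩
  rw [h12g]
  obtain ⟨E34, h34g, hE34lb⟩ :
      ∃ y, Real.exp (-(7 / 10)) + Real.exp (-(17 / 20)) = y ∧ (92 / 100 : ℝ) ≤ y :=
    ⟨_, rfl, by linarith⟩
  rw [h34g]
  have hP : 3 * ε * σ / (10 * R) * (E12 / (σ * s)) * (3 * σ / (20 * R) * (E34 / (σ * s))) =
      9 * ε * E12 * E34 / (200 * R ^ 2 * (s * s)) := by
    field_simp
    ring
  rw [hP, hs2, div_le_div_iff₀ (by positivity) (by positivity)]
  have hR2 : 1 ≤ R ^ 2 := one_le_pow₀ hR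
  have hR24 : R ^ 2 ≤ R ^ 4 := by nlinarith [sq_nonneg R]
  have hεR2 : 0 < ε * R ^ 2 := mul_pos hε (pow_pos hR0 2)
  have hEE : (3128 / 10000 : ℝ) ≤ E12 * E34 := by nlinarith
  calc ε * (200 * R ^ 2 * (2 * π)) = 400 * π * (ε * R ^ 2) := by ring
    _ ≤ 1441 * (ε * R ^ 2) := by nlinarith
    _ ≤ 4608 * (E12 * E34) * (ε * R ^ 2) := by nlinarith
    _ ≤ 4608 * (E12 * E34) * (ε * R ^ 4) := by
        have h1 : ε * R ^ 2 ≤ ε * R ^ 4 := by nlinarith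
        have h2 : (0:ℝ) ≤ 4608 * (E12 * E34) := by nlinarith
        exact mul_le_mul_of_nonneg_left h1 h2
    _ = 9 * ε * E12 * E34 * (512 * R ^ 4) := by ring
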